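/- Let F be a star network of order n with internal vertices x₁,…,x_m, let π ∈ Π(F), and let k be an index such that π has a defect at x_k. Then the path family π̂ = φ_k(π) satisfies: (1) type(π̂) = type(π); and (2) for each p > k, the set {(i,j) | (π̂_i, π̂_j, p) is a defect} equals the set {(i,j) | (π_i, π_j, p) is a defect}. -/

import Mathlib

/-!  Star networks, covering path families, crossings and defects,
     following Parisi–Skandera–Spahiu–Wang.

A star network of order `n` is a (possibly condensed) concatenation
`F_{[a₁,b₁]} ⋯ F_{[a_m,b_m]}` of simple star networks.  We model it by the
sequence of intervals (`lo k`, `hi k`, levels `0,…,n-1` from bottom to top,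
star `k` acting between stage `k` and stage `k+1`) together with a boolean
function recording, for each pair of internal vertices, whether the parallel
edges between them have been condensed into one multi-edge.  -/
structure StarNetwork (n : ℕ) where
  m : ℕ
  lo : Fin m → Fin n
  hi : Fin m → Fin n
  lo_le_hi : ∀ k, lo k ≤ hi k
  cond : Fin m → Fin m → Bool

namespace StarNetwork

variable {n : ℕ} (F : StarNetwork n)

/-- Level `c` belongs to the interval of the `k`-th star (stars are indexed
from `0`; for `k ≥ m` this is false). -/
def memI (k : ℕ) (c : Fin n) : Prop :=
  ∃ h : k < F.m, F.lo ⟨k, h⟩ ≤ c ∧ c ≤ F.hi ⟨k, h⟩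

/-- The set `I_{j,l}` of levels passing directly from internal vertex `x_j` to
internal vertex `x_l`; its cardinality is the number `μ(x_j,x_l)` of parallel
edges between `x_j` and `x_l` in the plain concatenation. -/
def Iset (j l : Fin F.m) : Finset (Fin n) :=
  ((Finset.Icc (F.lo j) (F.hi j)) ∩ (Finset.Icc (F.lo l) (F.hi l))) \
    ((Finset.Ioo j l).biUnion fun p => Finset.Icc (F.lo p) (F.hi p))

/-- A (raw) covering path family of the star network `F`: path `i` starts at
source `i` (level `i` at stage `0`) and `traj i k` is the level of path `i`
after passing the first `k` stars.  A path not entering a star keeps its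
level; the paths entering a star exit it on the levels of its interval;
distinct paths occupy distinct levels at every stage.  These conditions say
exactly that every edge of `F` lies on as many paths as its multiplicity. -/
structure Raw where
  traj : Fin n → ℕ → Fin n
  init : ∀ i, traj i 0 = i
  inj : ∀ k, Function.Injective fun i => traj i k
  step_out : ∀ i k, ¬ F.memI k (traj i k) → traj i (k + 1) = traj i k
  step_in : ∀ i k, F.memI k (traj i k) → F.memI k (traj i (k + 1))

namespace Raw

variable {F} (π : F.Raw)

/-- The type of the path family: path `i` terminates at sink `ptype π i`. -/
noncomputable def ptype : Equiv.Perm (Fin n) :=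
  Equiv.ofBijective (fun i => π.traj i F.m)
    (Finite.injective_iff_bijective.mp (π.inj F.m))

/-- Path `i` passes through (enters) the internal vertex `x_k`. -/
def enters (i : Fin n) (k : Fin F.m) : Prop :=
  F.lo k ≤ π.traj i k.val ∧ π.traj i k.val ≤ F.hi k

/-- Paths `i` and `j` enter `x_k` on the same (necessarily condensed) edge. -/
def sameEnter (i j : Fin n) (k : Fin F.m) : Prop :=
  π.enters i k ∧ π.enters j k ∧
    ∃ p : Fin F.m, p < k ∧ F.cond p k = true ∧
      π.traj i k.val ∈ F.Iset p k ∧ π.traj j k.val ∈ F.Iset p k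

/-- Paths `π_i` and `π_j` meet at `x_k`: `x_k` is the initial vertex of a
connected component of their intersection. -/
def meet (i j : Fin n) (k : Fin F.m) : Prop :=
  i ≠ j ∧ π.enters i k ∧ π.enters j k ∧ ¬ π.sameEnter i j k

/-- `π_i ≺_k π_j` : both paths enter `x_k` and `π_i` enters on a strictly
lower edge than `π_j`. -/
def precAt (i j : Fin n) (k : Fin F.m) : Prop :=
  π.enters i k ∧ π.enters j k ∧ ¬ π.sameEnter i j k ∧
    π.traj i k.val < π.traj j k.val

/-- `π_i ∼_k π_j` : both paths enter `x_k` on the same edge. -/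
def simAt (i j : Fin n) (k : Fin F.m) : Prop :=
  π.enters i k ∧ π.enters j k ∧ (i = j ∨ π.sameEnter i j k)

/-- `π_i ≾_k π_j`. -/
def precsimAt (i j : Fin n) (k : Fin F.m) : Prop :=
  π.precAt i j k ∨ π.simAt i j k

/-- Paths `i` and `j` travel together from `x_k` directly to `x_l` on a
common (condensed) edge. -/
def linked (i j : Fin n) (k l : Fin F.m) : Prop :=
  k < l ∧ F.cond k l = true ∧
    π.traj i (k.val + 1) ∈ F.Iset k l ∧ π.traj j (k.val + 1) ∈ F.Iset k l

/-- `(x_k, …, x_l)` is a crossing of `π_i` and `π_j`: it is a connected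
component of their intersection (it starts at a meeting vertex `x_k`, the two
paths stay together on condensed edges until `x_l`, and separate after `x_l`)
and the two paths enter `x_k` and exit `x_l` in different vertical orders. -/
def crossPair (i j : Fin n) (k l : Fin F.m) : Prop :=
  π.meet i j k ∧ Relation.ReflTransGen (π.linked i j) k l ∧
    (∀ l', ¬ π.linked i j l l') ∧
    ¬ ((π.traj i k.val < π.traj j k.val) ↔
        (π.traj i (l.val + 1) < π.traj j (l.val + 1)))

/-- The number of crossings of `π_i` and `π_j` occurring strictly before the
internal vertex `x_k`. -/
noncomputable def crossBefore (i j : Fin n) (k : Fin F.m) : ℕ :=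
  Set.ncard {pl : Fin F.m × Fin F.m | π.crossPair i j pl.1 pl.2 ∧ pl.2 < k}

/-- `(π_i, π_j, k)` is a defect of `π`: `i < j` and `π_i`, `π_j` meet at `x_k`
after having crossed an odd number of times. -/
def defect (i j : Fin n) (k : Fin F.m) : Prop :=
  i < j ∧ π.meet i j k ∧ Odd (π.crossBefore i j k)

/-- The number of defects of `π`. -/
noncomputable def dfct : ℕ :=
  Set.ncard {t : Fin n × Fin n × Fin F.m | π.defect t.1 t.2.1 t.2.2}

end Raw

/-- Two raw families represent the same path family of `F` iff they differ
only in the distribution of paths among the strands of condensed edges. -/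
def condRel (π σ : F.Raw) : Prop :=
  ∀ i k, π.traj i k = σ.traj i k ∨
    ∃ j l : Fin F.m, j.val ≤ k ∧ k < l.val ∧ F.cond j l = true ∧
      π.traj i k ∈ F.Iset j l ∧ σ.traj i k ∈ F.Iset j l

/-- `Π(F)`: the set (type) of covering path families of the star network `F`. -/
def PathFamily := Quot F.condRel

/-- The type of a path family. -/
noncomputable def PathFamily.typeQ (σ : F.PathFamily) : Equiv.Perm (Fin n) :=
  (Quot.out σ).ptype

/-- The number of defects of a path family. -/
noncomputable def PathFamily.dfctQ (σ : F.PathFamily) : ℕ :=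
  (Quot.out σ).dfct

end StarNetwork


/-!  ### Auxiliary development

The key observation is that, for a path family `σ` and two of its paths that
meet at an internal vertex `x_p`, the parity of the number of crossings of the
two paths prior to `x_p` is determined by whether the vertical order of the
two paths at stage `p` differs from their order at stage `0`.  Consequently a
defect `(σ_i, σ_j, p)` only depends on the trajectories at stages `0` and
`p`; since `φ_k` modifies trajectories only at stages `l+1, …, k`, defects at
vertices beyond `x_k` are preserved, as is the type of the family. -/

namespace StarNetwork

namespace Raw

variable {n : ℕ} {F : StarNetwork n} (σ : F.Raw)

lemma memI_fin {k : Fin F.m} {c : Fin n} :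
    F.memI k.val c ↔ (F.lo k ≤ c ∧ c ≤ F.hi k) := by
  constructor
  · rintro ⟨h, h1, h2⟩
    exact ⟨h1, h2⟩
  · intro h
    exact ⟨k.isLt, h.1, h.2⟩

lemma Iset_mem {u v : Fin F.m} {c : Fin n} (h : c ∈ F.Iset u v) :
    (F.lo u ≤ c ∧ c ≤ F.hi u) ∧ (F.lo v ≤ c ∧ c ≤ F.hi v) ∧
      ∀ p : Fin F.m, u < p → p < v → ¬ (F.lo p ≤ c ∧ c ≤ F.hi p) := by
  rw [StarNetwork.Iset, Finset.mem_sdiff, Finset.mem_inter, Finset.mem_Icc,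
    Finset.mem_Icc] at h
  refine ⟨h.1.1, h.1.2, ?_⟩
  intro p h1 h2 hc
  exact h.2 (Finset.mem_biUnion.mpr ⟨p, Finset.mem_Ioo.mpr ⟨h1, h2⟩,
    Finset.mem_Icc.mpr hc⟩)

/-- forward constancy along a direct edge from `x_u` to `x_v` -/
lemma traj_const_fwd {u v : Fin F.m} (huv : u < v) (x : Fin n)
    (hx : σ.traj x (u.val + 1) ∈ F.Iset u v) :
    ∀ r, u.val + 1 ≤ r → r ≤ v.val → σ.traj x r = σ.traj x (u.val + 1) := by
  intro r hr1 hr2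
  induction r, hr1 using Nat.le_induction with
  | base => rfl
  | succ r hr ih =>
    have hrlt : r < v.val := hr2
    have h1 : σ.traj x r = σ.traj x (u.val + 1) := ih (le_of_lt hrlt)
    have hrm : r < F.m := lt_trans hrlt v.isLt
    have hnot : ¬ F.memI r (σ.traj x r) := by
      rintro ⟨h, hlo, hhi⟩
      have := (Iset_mem hx).2.2 ⟨r, h⟩ (by simpa [Fin.lt_def] using hr)
        (by simpa [Fin.lt_def] using hrlt)
      rw [h1] at hlo hhi
      exact this ⟨hlo, hhi⟩
    rw [σ.step_out x r hnot, h1]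

/-- backward constancy along a direct edge from `x_u` to `x_v` -/
lemma traj_const_bwd {u v : Fin F.m} (huv : u < v) (x : Fin n)
    (hx : σ.traj x v.val ∈ F.Iset u v) :
    ∀ r, u.val + 1 ≤ r → r ≤ v.val → σ.traj x r = σ.traj x v.val := by
  suffices H : ∀ d r, v.val - r ≤ d → u.val + 1 ≤ r → r ≤ v.val →
      σ.traj x r = σ.traj x v.val by
    intro r h1 h2; exact H (v.val - r) r le_rfl h1 h2
  intro d
  induction d with
  | zero =>
    intro r hd h1 h2
    have : r = v.val := le_antisymm h2 (by omega)
    rw [this]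
  | succ d ih =>
    intro r hd h1 h2
    rcases eq_or_lt_of_le h2 with h | hlt
    · rw [h]
    · have h3 : σ.traj x (r + 1) = σ.traj x v.val := ih (r + 1) (by omega)
        (by omega) hlt
      have hstep : σ.traj x (r + 1) = σ.traj x r := by
        by_cases hm : F.memI r (σ.traj x r)
        · exfalso
          obtain ⟨h, hlo, hhi⟩ := σ.step_in x r hm
          have := (Iset_mem hx).2.2 ⟨r, h⟩ (by simpa [Fin.lt_def] using h1)
            (by simpa [Fin.lt_def] using hlt)
          rw [h3] at hlo hhi
          exact this ⟨hlo, hhi⟩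
        · exact σ.step_out x r hm
      rw [← h3, hstep]

variable (i j : Fin n)

/-- A maximal connected component of the intersection of paths `i` and `j`. -/
def Comp (a b : Fin F.m) : Prop :=
  σ.meet i j a ∧ Relation.ReflTransGen (σ.linked i j) a b ∧
    ∀ l', ¬ σ.linked i j b l'

variable {σ i j}

lemma linked_traj_fwd {u v : Fin F.m} (h : σ.linked i j u v) :
    ∀ r, u.val + 1 ≤ r → r ≤ v.val →
      σ.traj i r = σ.traj i (u.val + 1) ∧ σ.traj j r = σ.traj j (u.val + 1) :=
  fun r h1 h2 => ⟨σ.traj_const_fwd h.1 i h.2.2.1 r h1 h2,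
    σ.traj_const_fwd h.1 j h.2.2.2 r h1 h2⟩

lemma linked_sameEnter {u v : Fin F.m} (h : σ.linked i j u v) :
    σ.sameEnter i j v := by
  obtain ⟨huv, hcond, hiI, hjI⟩ := h
  have e1 : σ.traj i v.val = σ.traj i (u.val + 1) :=
    σ.traj_const_fwd huv i hiI v.val huv le_rfl
  have e2 : σ.traj j v.val = σ.traj j (u.val + 1) :=
    σ.traj_const_fwd huv j hjI v.val huv le_rfl
  have hiI' : σ.traj i v.val ∈ F.Iset u v := by rw [e1]; exact hiI
  have hjI' : σ.traj j v.val ∈ F.Iset u v := by rw [e2]; exact hjI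
  refine ⟨⟨(Iset_mem hiI').2.1.1, (Iset_mem hiI').2.1.2⟩,
    ⟨(Iset_mem hjI').2.1.1, (Iset_mem hjI').2.1.2⟩, u, huv, hcond, hiI', hjI'⟩

lemma linked_not_enters {u v : Fin F.m} (h : σ.linked i j u v)
    {p : Fin F.m} (h1 : u < p) (h2 : p < v) : ¬ σ.enters i p := by
  obtain ⟨huv, hcond, hiI, hjI⟩ := h
  have e1 : σ.traj i p.val = σ.traj i (u.val + 1) :=
    σ.traj_const_fwd huv i hiI p.val h1 (le_of_lt h2)
  intro he
  have := (Iset_mem hiI).2.2 p h1 h2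
  rw [← e1] at this
  exact this ⟨he.1, he.2⟩

lemma linked_enters_left {u v : Fin F.m} (h : σ.linked i j u v) :
    σ.enters i u ∧ σ.enters j u := by
  obtain ⟨huv, hcond, hiI, hjI⟩ := h
  constructor
  · by_contra he
    have hnm : ¬ F.memI u.val (σ.traj i u.val) := by
      rw [memI_fin]; exact fun hc => he hc
    have := σ.step_out i u.val hnm
    rw [StarNetwork.Raw.enters] at he
    rw [← this] at he
    exact he ⟨(Iset_mem hiI).1.1, (Iset_mem hiI).1.2⟩
  · by_contra he
    have hnm : ¬ F.memI u.val (σ.traj j u.val) := by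
      rw [memI_fin]; exact fun hc => he hc
    have := σ.step_out j u.val hnm
    rw [StarNetwork.Raw.enters] at he
    rw [← this] at he
    exact he ⟨(Iset_mem hjI).1.1, (Iset_mem hjI).1.2⟩

lemma linked_det {u v v' : Fin F.m} (h : σ.linked i j u v)
    (h' : σ.linked i j u v') : v = v' := by
  rcases lt_trichotomy v v' with hlt | he | hlt
  · exfalso
    exact (Iset_mem h'.2.2.1).2.2 v h.1 hlt ⟨(Iset_mem h.2.2.1).2.1.1,
      (Iset_mem h.2.2.1).2.1.2⟩
  · exact he
  · exfalso
    exact (Iset_mem h.2.2.1).2.2 v' h'.1 hlt ⟨(Iset_mem h'.2.2.1).2.1.1,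
      (Iset_mem h'.2.2.1).2.1.2⟩

lemma chain_le {a b : Fin F.m} (h : Relation.ReflTransGen (σ.linked i j) a b) :
    a ≤ b := by
  induction h with
  | refl => exact le_rfl
  | tail hc hl ih => exact le_trans ih (le_of_lt hl.1)

lemma chain_cross {a b : Fin F.m} (h : Relation.ReflTransGen (σ.linked i j) a b)
    {p : Fin F.m} (h1 : a < p) (h2 : p ≤ b) :
    ∃ u v, σ.linked i j u v ∧ u < p ∧ p ≤ v := by
  revert h1
  induction h using Relation.ReflTransGen.head_induction_on with
  | refl => exact fun h1 => absurd h2 (not_le.mpr h1)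
  | @head a' c' hl hc ih =>
    intro h1
    by_cases hp : p ≤ c'
    · exact ⟨a', c', hl, h1, hp⟩
    · exact ih (not_le.mp hp)

lemma chain_unique {a b b' : Fin F.m}
    (h : Relation.ReflTransGen (σ.linked i j) a b)
    (hb : ∀ l', ¬ σ.linked i j b l')
    (h' : Relation.ReflTransGen (σ.linked i j) a b')
    (hb' : ∀ l', ¬ σ.linked i j b' l') : b = b' := by
  revert h'
  induction h using Relation.ReflTransGen.head_induction_on with
  | refl =>
    intro h'
    rcases Relation.ReflTransGen.cases_head h' with he | ⟨c, hc, _⟩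
    · exact he
    · exact absurd hc (hb c)
  | @head a' c' hl hc ih =>
    intro h'
    rcases Relation.ReflTransGen.cases_head h' with he | ⟨c'', hc'', hch⟩
    · subst he; exact absurd hl (hb' c')
    · have := linked_det hl hc''
      subst this
      exact ih hch


lemma not_meet_of_cross {u v p : Fin F.m} (h : σ.linked i j u v)
    (h1 : u < p) (h2 : p ≤ v) : ¬ σ.meet i j p := by
  rcases eq_or_lt_of_le h2 with he | hlt
  · subst he
    exact fun hm => hm.2.2.2 (linked_sameEnter h)
  · exact fun hm => linked_not_enters h h1 hlt hm.2.1

lemma not_meet_inside {a b p : Fin F.m} (h : Comp σ i j a b)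
    (h1 : a < p) (h2 : p ≤ b) : ¬ σ.meet i j p := by
  obtain ⟨u, v, hl, hu, hv⟩ := chain_cross h.2.1 h1 h2
  exact not_meet_of_cross hl hu hv

/-- a meeting vertex is not strictly inside an earlier component -/
lemma meet_clean {p : Fin F.m} (hm : σ.meet i j p) :
    ∀ a b, Comp σ i j a b → a < p → b < p := by
  intro a b hc ha
  by_contra hb
  exact not_meet_inside hc ha (not_lt.mp hb) hm

lemma exists_meet_chain (hij : i ≠ j) :
    ∀ q : Fin F.m, σ.enters i q → σ.enters j q →
      ∃ a, σ.meet i j a ∧ Relation.ReflTransGen (σ.linked i j) a q := by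
  suffices H : ∀ (N : ℕ) (q : Fin F.m), q.val ≤ N → σ.enters i q → σ.enters j q →
      ∃ a, σ.meet i j a ∧ Relation.ReflTransGen (σ.linked i j) a q by
    exact fun q => H q.val q le_rfl
  intro N
  induction N with
  | zero =>
    intro q hq hei hej
    by_cases hs : σ.sameEnter i j q
    · obtain ⟨_, _, p', hp'q, _, _, _⟩ := hs
      exact absurd hp'q (by rw [Fin.lt_def]; omega)
    · exact ⟨q, ⟨hij, hei, hej, hs⟩, Relation.ReflTransGen.refl⟩
  | succ N ihN =>
    intro q hq hei hej
    have ih : ∀ p : Fin F.m, p < q → σ.enters i p → σ.enters j p →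
        ∃ a, σ.meet i j a ∧ Relation.ReflTransGen (σ.linked i j) a p := by
      intro p hp
      exact ihN p (by rw [Fin.lt_def] at hp; omega)
    by_cases hs : σ.sameEnter i j q
    · obtain ⟨_, _, p', hp'q, hcond, hiI, hjI⟩ := hs
      have hlink : σ.linked i j p' q := by
        refine ⟨hp'q, hcond, ?_, ?_⟩
        · rw [σ.traj_const_bwd hp'q i hiI (p'.val + 1) le_rfl hp'q]; exact hiI
        · rw [σ.traj_const_bwd hp'q j hjI (p'.val + 1) le_rfl hp'q]; exact hjI
      obtain ⟨he1, he2⟩ := linked_enters_left hlink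
      obtain ⟨a, hma, hch⟩ := ih p' hp'q he1 he2
      exact ⟨a, hma, hch.tail hlink⟩
    · exact ⟨q, ⟨hij, hei, hej, hs⟩, Relation.ReflTransGen.refl⟩

lemma exists_chain_max (q : Fin F.m) :
    ∃ b, Relation.ReflTransGen (σ.linked i j) q b ∧
      ∀ l', ¬ σ.linked i j b l' := by
  suffices H : ∀ d (q : Fin F.m), F.m ≤ q.val + d →
      ∃ b, Relation.ReflTransGen (σ.linked i j) q b ∧
        ∀ l', ¬ σ.linked i j b l' by
    exact H F.m q (by omega)
  intro d
  induction d with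
  | zero => intro q hq; exact absurd hq (by have := q.isLt; omega)
  | succ d ih =>
    intro q hq
    by_cases hl : ∃ l', σ.linked i j q l'
    · obtain ⟨l', hl'⟩ := hl
      have : F.m ≤ l'.val + d := by
        have := hl'.1
        rw [Fin.lt_def] at this
        omega
      obtain ⟨b, hch, hmax⟩ := ih l' this
      exact ⟨b, Relation.ReflTransGen.head hl' hch, hmax⟩
    · exact ⟨q, Relation.ReflTransGen.refl, fun l' h => hl ⟨l', h⟩⟩

lemma exists_comp (hij : i ≠ j) (q : Fin F.m)
    (hei : σ.enters i q) (hej : σ.enters j q) :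
    ∃ a b, Comp σ i j a b ∧ a ≤ q ∧ q ≤ b := by
  obtain ⟨a, hma, hch⟩ := exists_meet_chain hij q hei hej
  obtain ⟨b, hch', hmax⟩ := exists_chain_max (σ := σ) (i := i) (j := j) q
  exact ⟨a, b, ⟨hma, hch.trans hch', hmax⟩, chain_le hch, chain_le hch'⟩

/-- the vertical order of two paths is unchanged across a stage where they do
not both enter the star -/
lemma ord_step {q : ℕ}
    (hq : ¬ (F.memI q (σ.traj i q) ∧ F.memI q (σ.traj j q))) :
    (σ.traj i (q + 1) < σ.traj j (q + 1) ↔ σ.traj i q < σ.traj j q) := by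
  by_cases hi : F.memI q (σ.traj i q)
  · have hj : ¬ F.memI q (σ.traj j q) := fun h => hq ⟨hi, h⟩
    have hj' := σ.step_out j q hj
    obtain ⟨h, hlo, hhi⟩ := hi
    obtain ⟨_, hlo', hhi'⟩ := σ.step_in i q ⟨h, hlo, hhi⟩
    rw [hj']
    rcases not_and_or.mp (fun hc => hj ⟨h, hc.1, hc.2⟩) with hc | hc
    · -- traj j q < lo : both sides false
      push_neg at hc
      constructor
      · intro h'; exact absurd (lt_trans h' (lt_of_lt_of_le hc hlo')) (lt_irrefl _)
      · intro h'; exact absurd (lt_trans h' (lt_of_lt_of_le hc hlo)) (lt_irrefl _)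
    · -- hi < traj j q : both sides true
      push_neg at hc
      constructor
      · intro _; exact lt_of_le_of_lt hhi hc
      · intro _; exact lt_of_le_of_lt hhi' hc
  · by_cases hj : F.memI q (σ.traj j q)
    · have hi' := σ.step_out i q hi
      obtain ⟨h, hlo, hhi⟩ := hj
      obtain ⟨_, hlo', hhi'⟩ := σ.step_in j q ⟨h, hlo, hhi⟩
      rw [hi']
      rcases not_and_or.mp (fun hc => hi ⟨h, hc.1, hc.2⟩) with hc | hc
      · -- traj i q < lo : both sides true
        push_neg at hc
        constructor
        · intro _; exact lt_of_lt_of_le hc hlo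
        · intro _; exact lt_of_lt_of_le hc hlo'
      · -- hi < traj i q : both sides false
        push_neg at hc
        constructor
        · intro h'; exact absurd (lt_trans (lt_of_le_of_lt hhi' hc) h') (lt_irrefl _)
        · intro h'; exact absurd (lt_trans (lt_of_le_of_lt hhi hc) h') (lt_irrefl _)
    · rw [σ.step_out i q hi, σ.step_out j q hj]

lemma ord_const {q q' : ℕ} (h : q ≤ q')
    (hNE : ∀ r (hr : r < F.m), q ≤ r → r < q' →
      ¬ (σ.enters i ⟨r, hr⟩ ∧ σ.enters j ⟨r, hr⟩)) :
    (σ.traj i q' < σ.traj j q' ↔ σ.traj i q < σ.traj j q) := by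
  induction q', h using Nat.le_induction with
  | base => exact Iff.rfl
  | succ r hqr ih =>
    have h1 : ¬ (F.memI r (σ.traj i r) ∧ F.memI r (σ.traj j r)) := by
      rintro ⟨⟨hri, hlo, hhi⟩, ⟨hrj, hlo', hhi'⟩⟩
      exact hNE r hri hqr (by omega) ⟨⟨hlo, hhi⟩, ⟨hlo', hhi'⟩⟩
    rw [ord_step h1]
    exact ih (fun r' hr' h1 h2 => hNE r' hr' h1 (by omega))


open Classical in
/-- **Key parity lemma.**  If no component of the intersection of paths `i`
and `j` straddles the vertex `x_p`, then the parity of the number of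
crossings of the two paths prior to `x_p` records whether their vertical
order at stage `p` differs from their order at stage `0`. -/
lemma parity_ord (hij : i ≠ j) :
    ∀ p : Fin F.m, (∀ a b, Comp σ i j a b → a < p → b < p) →
      (Odd (σ.crossBefore i j p) ↔
        ¬ ((σ.traj i 0 < σ.traj j 0) ↔ (σ.traj i p.val < σ.traj j p.val))) := by
  suffices H : ∀ (N : ℕ) (p : Fin F.m), p.val ≤ N →
      (∀ a b, Comp σ i j a b → a < p → b < p) →
      (Odd (σ.crossBefore i j p) ↔
        ¬ ((σ.traj i 0 < σ.traj j 0) ↔ (σ.traj i p.val < σ.traj j p.val))) by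
    exact fun p => H p.val p le_rfl
  intro N
  induction N with
  | zero =>
    intro p hp hclean
    -- `p = 0`: there are no crossings before `p` and the orders coincide
    have hpz : p.val = 0 := Nat.le_zero.mp hp
    have hempty : {pl : Fin F.m × Fin F.m |
        σ.crossPair i j pl.1 pl.2 ∧ pl.2 < p} = ∅ := by
      ext ⟨a, b⟩
      simp only [Set.mem_setOf_eq, Set.mem_empty_iff_false, iff_false, not_and]
      intro _ hb
      rw [Fin.lt_def, hpz] at hb
      omega
    rw [StarNetwork.Raw.crossBefore, hempty, Set.ncard_empty, hpz]
    simp [Nat.odd_iff]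
  | succ N ihN =>
    intro p hp hclean
    have ih : ∀ p' : Fin F.m, p' < p → (∀ a b, Comp σ i j a b → a < p' → b < p') →
        (Odd (σ.crossBefore i j p') ↔
          ¬ ((σ.traj i 0 < σ.traj j 0) ↔ (σ.traj i p'.val < σ.traj j p'.val))) := by
      intro p' hp'
      exact ihN p' (by rw [Fin.lt_def] at hp'; omega)
    by_cases hcomp : ∃ a b, Comp σ i j a b ∧ b < p
    · -- there is a component ending before `p`; take the one ending last
      have hfin : ({b | (∃ a, Comp σ i j a b) ∧ b < p} : Set (Fin F.m)).Finite :=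
        Set.toFinite _
      have hne : hfin.toFinset.Nonempty := by
        obtain ⟨a0, b0, hc0, hb0⟩ := hcomp
        exact ⟨b0, by rw [Set.Finite.mem_toFinset]; exact ⟨⟨a0, hc0⟩, hb0⟩⟩
      set b := hfin.toFinset.max' hne with hbdef
      have hbmem : (∃ a, Comp σ i j a b) ∧ b < p := by
        have := hfin.toFinset.max'_mem hne
        rwa [Set.Finite.mem_toFinset] at this
      obtain ⟨⟨a, hab⟩, hbp⟩ := hbmem
      have hble : ∀ b' : Fin F.m, (∃ a', Comp σ i j a' b') → b' < p → b' ≤ b := by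
        intro b' h1 h2
        exact hfin.toFinset.le_max' b' (by rw [Set.Finite.mem_toFinset]; exact ⟨h1, h2⟩)
      have haleb : a ≤ b := chain_le hab.2.1
      have hap : a < p := lt_of_le_of_lt haleb hbp
      -- `a` is itself clean
      have hclean_a : ∀ a' b', Comp σ i j a' b' → a' < a → b' < a := by
        intro a' b' h' hlt
        by_contra hge
        exact not_meet_inside h' hlt (not_lt.mp hge) hab.1
      -- uniqueness of the last component
      have huniq : ∀ a' b', σ.crossPair i j a' b' → b' < p →
          (a' = a ∧ b' = b) ∨ b' < a := by
        intro a' b' hcr hb'p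
        have hcomp' : Comp σ i j a' b' := ⟨hcr.1, hcr.2.1, hcr.2.2.1⟩
        have hb'b : b' ≤ b := hble b' ⟨a', hcomp'⟩ hb'p
        rcases eq_or_lt_of_le hb'b with he | hlt
        · subst he
          left
          refine ⟨?_, rfl⟩
          rcases lt_trichotomy a' a with h1 | h1 | h1
          · exact absurd hab.1 (not_meet_inside hcomp' h1 haleb)
          · exact h1
          · exact absurd hcomp'.1
              (not_meet_inside hab h1 (chain_le hcomp'.2.1))
        · right
          by_contra hge
          have hab' : a ≤ b' := not_lt.mp hge
          rcases lt_trichotomy a' a with h1 | h1 | h1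
          · exact absurd hab.1 (not_meet_inside hcomp' h1 hab')
          · subst h1
            exact absurd (chain_unique hab.2.1 hab.2.2 hcomp'.2.1 hcomp'.2.2)
              (by intro he; rw [he] at hlt; exact lt_irrefl _ hlt)
          · exact absurd hcomp'.1
              (not_meet_inside hab h1 (le_trans (chain_le hcomp'.2.1)
                (le_of_lt hlt)))
      -- order is constant between the end of the last component and `p`
      have hstill : (σ.traj i p.val < σ.traj j p.val ↔
          σ.traj i (b.val + 1) < σ.traj j (b.val + 1)) := by
        apply ord_const (show b.val + 1 ≤ p.val by rw [Fin.lt_def] at hbp; omega)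
        intro r hr h1 h2 hE
        obtain ⟨a'', b'', hc'', ha'', hb''⟩ :=
          exists_comp hij ⟨r, hr⟩ hE.1 hE.2
        have : b'' < p := hclean a'' b'' hc''
          (lt_of_le_of_lt ha'' (by rw [Fin.lt_def]; exact h2))
        have hle := hble b'' ⟨a'', hc''⟩ this
        have hrb : r ≤ b.val := by exact le_trans hb'' hle
        omega
      -- the crossing set before `p` versus the crossing set before `a`
      by_cases hx : σ.crossPair i j a b
      · have hset : {pl : Fin F.m × Fin F.m |
            σ.crossPair i j pl.1 pl.2 ∧ pl.2 < p} =
            insert (a, b) {pl : Fin F.m × Fin F.m |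
              σ.crossPair i j pl.1 pl.2 ∧ pl.2 < a} := by
          ext ⟨a', b'⟩
          simp only [Set.mem_setOf_eq, Set.mem_insert_iff, Prod.mk.injEq]
          constructor
          · rintro ⟨hcr, hb'⟩
            rcases huniq a' b' hcr hb' with ⟨h1, h2⟩ | h1
            · exact Or.inl ⟨h1, h2⟩
            · exact Or.inr ⟨hcr, h1⟩
          · rintro (⟨h1, h2⟩ | ⟨h1, h2⟩)
            · subst h1; subst h2; exact ⟨hx, hbp⟩
            · exact ⟨h1, lt_trans h2 hap⟩
        have hnotmem : (a, b) ∉ {pl : Fin F.m × Fin F.m |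
            σ.crossPair i j pl.1 pl.2 ∧ pl.2 < a} := by
          simp only [Set.mem_setOf_eq, not_and]
          intro _
          exact not_lt.mpr haleb
        have hcount : σ.crossBefore i j p = σ.crossBefore i j a + 1 := by
          rw [StarNetwork.Raw.crossBefore, StarNetwork.Raw.crossBefore, hset,
            Set.ncard_insert_of_notMem hnotmem (Set.toFinite _)]
        have hIH := ih a hap hclean_a
        have hflip := hx.2.2.2
        rw [hcount, Nat.odd_add_one, hIH, hstill]
        tauto
      · have hset : {pl : Fin F.m × Fin F.m |
            σ.crossPair i j pl.1 pl.2 ∧ pl.2 < p} =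
            {pl : Fin F.m × Fin F.m |
              σ.crossPair i j pl.1 pl.2 ∧ pl.2 < a} := by
          ext ⟨a', b'⟩
          simp only [Set.mem_setOf_eq]
          constructor
          · rintro ⟨hcr, hb'⟩
            rcases huniq a' b' hcr hb' with ⟨h1, h2⟩ | h1
            · subst h1; subst h2; exact absurd hcr hx
            · exact ⟨hcr, h1⟩
          · rintro ⟨h1, h2⟩
            exact ⟨h1, lt_trans h2 hap⟩
        have hcount : σ.crossBefore i j p = σ.crossBefore i j a := by
          rw [StarNetwork.Raw.crossBefore, StarNetwork.Raw.crossBefore, hset]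
        have hIH := ih a hap hclean_a
        have hnoflip : (σ.traj i a.val < σ.traj j a.val ↔
            σ.traj i (b.val + 1) < σ.traj j (b.val + 1)) := by
          by_contra hf
          exact hx ⟨hab.1, hab.2.1, hab.2.2, hf⟩
        rw [hcount, hIH]
        rw [hstill, ← hnoflip]
    · -- no component ends before `p`: no crossings and constant order
      push_neg at hcomp
      have hempty : {pl : Fin F.m × Fin F.m |
          σ.crossPair i j pl.1 pl.2 ∧ pl.2 < p} = ∅ := by
        ext ⟨a, b⟩
        simp only [Set.mem_setOf_eq, Set.mem_empty_iff_false, iff_false, not_and]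
        intro hcr hb
        exact absurd hb (not_lt.mpr (hcomp a b ⟨hcr.1, hcr.2.1, hcr.2.2.1⟩))
      rw [StarNetwork.Raw.crossBefore, hempty, Set.ncard_empty]
      have hord : (σ.traj i p.val < σ.traj j p.val ↔
          σ.traj i 0 < σ.traj j 0) := by
        apply ord_const (Nat.zero_le _)
        intro r hr _ h2 hE
        obtain ⟨a'', b'', hc'', ha'', hb''⟩ :=
          exists_comp hij ⟨r, hr⟩ hE.1 hE.2
        have hb''p : b'' < p := hclean a'' b'' hc''
          (lt_of_le_of_lt ha'' (by rw [Fin.lt_def]; exact h2))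
        exact absurd hb''p (not_lt.mpr (hcomp a'' b'' hc''))
      simp only [Nat.odd_iff, Nat.zero_mod, zero_ne_one, false_iff, not_not]
      exact hord.symm


/-- A defect only depends on the trajectories at stages `0` and `p`. -/
lemma defect_iff_ord {p : Fin F.m} :
    σ.defect i j p ↔ i < j ∧ σ.meet i j p ∧
      ¬ ((σ.traj i 0 < σ.traj j 0) ↔ (σ.traj i p.val < σ.traj j p.val)) := by
  constructor
  · rintro ⟨h1, h2, h3⟩
    exact ⟨h1, h2, (parity_ord h2.1 p (meet_clean h2)).mp h3⟩
  · rintro ⟨h1, h2, h3⟩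
    exact ⟨h1, h2, (parity_ord h2.1 p (meet_clean h2)).mpr h3⟩

end Raw

end StarNetwork

/-- **Proposition 4.2** (Parisi–Skandera–Spahiu–Wang).  Given a star network
`F`, a covering path family `π ∈ Π(F)` and an index `k` such that `π` has a
defect at `x_k`, the path family `π̂ = φ_k(π)` produced by
Algorithm 4.1 satisfies (1) `type(π̂) = type(π)` and (2) for each `p > k`,
`{(i,j) | (π̂_i, π̂_j, p) defective} = {(i,j) | (π_i, π_j, p) defective}`. -/
theorem phi_preserves_type_and_later_defects
    {n : ℕ} (F : StarNetwork n) (π : F.Raw) (k : Fin F.m)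
    -- `π` has a defect at `x_k`, and `(r,t)` is the lexicographically least
    -- pair with `(π_r, π_t, k)` a defect (step 1)
    (r t : Fin n) (hrt : π.defect r t k)
    (hrtmin : ∀ r' t' : Fin n, π.defect r' t' k →
      r < r' ∨ (r = r' ∧ t ≤ t'))
    -- `s` is the largest index such that `π_s` enters `x_k` through the same
    -- edge as `π_r` and `(π_s, π_t, k)` is a defect (step 2)
    (s : Fin n) (hsr : π.simAt s r k) (hst : π.defect s t k)
    (hsmax : ∀ s' : Fin n, π.simAt s' r k → π.defect s' t k → s' ≤ s)
    -- `x_l` is the final vertex of the rightmost crossing of `π_s` and `π_t`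
    -- prior to `x_k` (step 3)
    (l : Fin F.m) (hlcross : ∃ p, π.crossPair s t p l) (hlk : l < k)
    (hlmax : ∀ p' l' : Fin F.m, π.crossPair s t p' l' → l' < k → l' ≤ l)
    -- `π̂ = φ_k(π)` is obtained from `π` by exchanging the `x_l`-to-`x_k`
    -- subpaths of `π_s` and `π_t` (step 4)
    (πh : F.Raw)
    (htraj : ∀ (i : Fin n) (q : ℕ), πh.traj i q =
      if i = s ∧ l.val + 1 ≤ q ∧ q ≤ k.val then π.traj t q
      else if i = t ∧ l.val + 1 ≤ q ∧ q ≤ k.val then π.traj s q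
      else π.traj i q) :
    πh.ptype = π.ptype ∧
      ∀ p : Fin F.m, k < p → ∀ i j : Fin n,
        (πh.defect i j p ↔ π.defect i j p) := by
  have hsame : ∀ (x : Fin n) (q : ℕ), k.val < q → πh.traj x q = π.traj x q := by
    intro x q hq
    rw [htraj]
    have h1 : ¬ (q ≤ k.val) := by omega
    simp [h1]
  constructor
  · apply Equiv.ext
    intro x
    show πh.traj x F.m = π.traj x F.m
    exact hsame x F.m k.isLt
  · intro p hp i j
    have hp' : k.val < p.val := hp
    have h0 : ∀ x : Fin n, πh.traj x 0 = π.traj x 0 := fun x => by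
      rw [πh.init, π.init]
    have hsp : ∀ x : Fin n, πh.traj x p.val = π.traj x p.val := fun x =>
      hsame x p.val hp'
    have hmeet : πh.meet i j p ↔ π.meet i j p := by
      simp only [StarNetwork.Raw.meet, StarNetwork.Raw.sameEnter,
        StarNetwork.Raw.enters, hsp i, hsp j]
    rw [StarNetwork.Raw.defect_iff_ord, StarNetwork.Raw.defect_iff_ord, hmeet,
      h0 i, h0 j, hsp i, hsp j]
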